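/- Let k and ℓ be integers with 1 ≤ ℓ ≤ k. Then ᾱ({1, 2k, 2k+2ℓ}) ≥ 2k/(4k+2ℓ). -/

import Mathlib

open Filter

/-- The upper density of a set of integers. -/
noncomputable def density (A : Set ℤ) : ℝ :=
  Filter.limsup
    (fun N : ℕ => ((A ∩ Set.Icc (-(N : ℤ)) (N : ℤ)).ncard : ℝ) / (2 * (N : ℝ) + 1))
    Filter.atTop

/-- A set of integers is independent in the distance graph `G(S)` if no two distinct
elements differ by an element of `S`. -/
def IsIndepSet (S : Finset ℕ) (A : Set ℤ) : Prop :=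
  ∀ a ∈ A, ∀ b ∈ A, a ≠ b → (a - b).natAbs ∉ S

/-- The independence ratio of the distance graph `G(S)`. -/
noncomputable def indRatio (S : Finset ℕ) : ℝ :=
  sSup (density '' {A : Set ℤ | IsIndepSet S A})

/-- The periodic independent set: residues `{2i : i<k} ∪ {2k+2ℓ-1+2i : i<k}` mod `4k+2ℓ`. -/
def Aset (k ℓ : ℕ) : Set ℤ :=
  {x | ∃ i : ℕ, i < k ∧
    (x % (4 * (k : ℤ) + 2 * ℓ) = 2 * i ∨
     x % (4 * (k : ℤ) + 2 * ℓ) = 2 * k + 2 * ℓ - 1 + 2 * i)}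

lemma Aset_indep (k ℓ : ℕ) (hℓ : 1 ≤ ℓ) (hk : ℓ ≤ k) :
    IsIndepSet ({1, 2 * k, 2 * k + 2 * ℓ} : Finset ℕ) (Aset k ℓ) := by
  intro a ha b hb hab hmem
  obtain ⟨i, hi, hri⟩ := ha
  obtain ⟨j, hj, hrj⟩ := hb
  simp only [Finset.mem_insert, Finset.mem_singleton] at hmem
  obtain ⟨m, hm⟩ : ∃ m : ℤ, 4 * (k : ℤ) + 2 * ℓ = m := ⟨_, rfl⟩
  rw [hm] at hri hrj
  have hm0 : (0 : ℤ) < m := by omega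
  have hra : 0 ≤ a % m := Int.emod_nonneg a hm0.ne'
  have hrb : 0 ≤ b % m := Int.emod_nonneg b hm0.ne'
  have hra' : a % m < m := Int.emod_lt_of_pos a hm0
  have hrb' : b % m < m := Int.emod_lt_of_pos b hm0
  obtain ⟨t, ht⟩ : ∃ t : ℤ, a - b - (a % m - b % m) = m * t :=
    ⟨a / m - b / m, by rw [Int.emod_def, Int.emod_def]; ring⟩
  have h1 : -2 < t := by
    by_contra h
    push_neg at h
    have : m * t ≤ m * (-2) := mul_le_mul_of_nonneg_left h hm0.le
    omega
  have h2 : t < 2 := by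
    by_contra h
    push_neg at h
    have : m * 2 ≤ m * t := mul_le_mul_of_nonneg_left h hm0.le
    omega
  interval_cases t <;> omega

lemma count_ge (k ℓ N : ℕ) (hℓ : 1 ≤ ℓ) (hk : ℓ ≤ k) (hN : 4 * k + 2 * ℓ ≤ N) :
    (2 * ((N : ℤ) / (4 * (k : ℤ) + 2 * ℓ)) - 1) * (2 * k) ≤
      ((Aset k ℓ ∩ Set.Icc (-(N : ℤ)) (N : ℤ)).ncard : ℤ) := by
  set m : ℤ := 4 * (k : ℤ) + 2 * ℓ with hm
  have hm0 : (0 : ℤ) < m := by positivity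
  set t : ℤ := (N : ℤ) / m - 1 with htdef
  have hDl : (N : ℤ) - m + 1 ≤ m * ((N : ℤ) / m) := by
    have h1 := Int.emod_lt_of_pos (N : ℤ) hm0
    have h2 := Int.mul_ediv_add_emod (N : ℤ) m
    omega
  have hDu : m * ((N : ℤ) / m) ≤ (N : ℤ) := by
    have h2 := Int.mul_ediv_add_emod (N : ℤ) m
    have h1 := Int.emod_nonneg (N : ℤ) hm0.ne'
    omega
  have ht0 : 0 ≤ t := by
    rw [htdef]
    have : (1 : ℤ) ≤ (N : ℤ) / m := by
      rw [Int.le_ediv_iff_mul_le hm0]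
      push_cast
      omega
    omega
  set R : Finset ℤ := ((Finset.range k).image fun i : ℕ => 2 * (i : ℤ)) ∪
      ((Finset.range k).image fun i : ℕ => 2 * (k : ℤ) + 2 * ℓ - 1 + 2 * (i : ℤ)) with hR
  have hRcard : R.card = 2 * k := by
    rw [hR, Finset.card_union_of_disjoint, Finset.card_image_of_injective,
      Finset.card_image_of_injective, Finset.card_range]
    · ring
    · intro x y hxy; simp only at hxy; omega
    · intro x y hxy; simp only at hxy; omega
    · rw [Finset.disjoint_left]
      rintro x hx hy
      simp only [Finset.mem_image, Finset.mem_range] at hx hy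
      obtain ⟨i, hi, rfl⟩ := hx
      obtain ⟨j, hj, h⟩ := hy
      omega
  have hRmem : ∀ r ∈ R, 0 ≤ r ∧ r < m ∧
      ∃ i : ℕ, i < k ∧ (r = 2 * i ∨ r = 2 * (k : ℤ) + 2 * ℓ - 1 + 2 * i) := by
    intro r hr
    rw [hR] at hr
    simp only [Finset.mem_union, Finset.mem_image, Finset.mem_range] at hr
    rcases hr with ⟨i, hi, rfl⟩ | ⟨i, hi, rfl⟩
    · exact ⟨by positivity, by omega, i, hi, Or.inl rfl⟩
    · exact ⟨by omega, by omega, i, hi, Or.inr rfl⟩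
  set P : Finset (ℤ × ℤ) := (Finset.Icc (-t) t) ×ˢ R with hP
  set f : ℤ × ℤ → ℤ := fun p => p.1 * m + p.2 with hf
  have hinj : Set.InjOn f P := by
    intro p hp q hq hpq
    rw [hP, Finset.mem_coe, Finset.mem_product] at hp hq
    have hp2 := hRmem p.2 hp.2
    have hq2 := hRmem q.2 hq.2
    have h1 : p.2 = q.2 := by
      have e1 : (p.1 * m + p.2) % m = p.2 := by
        rw [add_comm, Int.add_mul_emod_self_right]
        exact Int.emod_eq_of_lt hp2.1 hp2.2.1
      have e2 : (q.1 * m + q.2) % m = q.2 := by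
        rw [add_comm, Int.add_mul_emod_self_right]
        exact Int.emod_eq_of_lt hq2.1 hq2.2.1
      rw [hf] at hpq
      simp only at hpq
      rw [← e1, ← e2, hpq]
    have h2 : p.1 = q.1 := by
      rw [hf] at hpq
      simp only at hpq
      have h3 : p.1 * m = q.1 * m := by omega
      exact mul_right_cancel₀ hm0.ne' h3
    exact Prod.ext h2 h1
  have hsub : ↑(P.image f) ⊆ Aset k ℓ ∩ Set.Icc (-(N : ℤ)) (N : ℤ) := by
    intro x hx
    rw [Finset.coe_image] at hx
    obtain ⟨p, hp, rfl⟩ := hx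
    rw [Finset.mem_coe, hP, Finset.mem_product, Finset.mem_Icc] at hp
    obtain ⟨⟨hq1, hq2⟩, hr⟩ := hp
    obtain ⟨hr0, hrm, i, hi, hcase⟩ := hRmem p.2 hr
    constructor
    · refine ⟨i, hi, ?_⟩
      have e1 : (p.1 * m + p.2) % m = p.2 := by
        rw [add_comm, Int.add_mul_emod_self_right]
        exact Int.emod_eq_of_lt hr0 hrm
      rw [hf]
      simp only
      rw [← hm, e1]
      exact hcase
    · rw [Set.mem_Icc, hf]
      simp only
      have hb1 : p.1 * m ≤ t * m := mul_le_mul_of_nonneg_right hq2 hm0.le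
      have hb2 : -(t * m) ≤ p.1 * m := by
        have := mul_le_mul_of_nonneg_right hq1 hm0.le
        simpa [neg_mul] using this
      have htm : t * m ≤ (N : ℤ) - m + 1 := by
        have he : t * m = m * ((N : ℤ) / m) - m := by rw [htdef]; ring
        omega
      constructor <;> omega
  have hcard : (P.image f).card = (2 * t + 1).toNat * (2 * k) := by
    rw [Finset.card_image_of_injOn hinj, hP, Finset.card_product, hRcard, Int.card_Icc]
    congr 1
    omega
  have hfin : (Aset k ℓ ∩ Set.Icc (-(N : ℤ)) (N : ℤ)).Finite :=
    (Set.finite_Icc _ _).inter_of_right _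
  have hle : (P.image f).card ≤ (Aset k ℓ ∩ Set.Icc (-(N : ℤ)) (N : ℤ)).ncard := by
    rw [← Set.ncard_coe_finset]
    exact Set.ncard_le_ncard hsub hfin
  rw [hcard] at hle
  have htn : ((2 * t + 1).toNat : ℤ) = 2 * t + 1 := by omega
  have h2 : (2 * ((N : ℤ) / m) - 1) * (2 * (k : ℤ)) = (2 * t + 1) * (2 * k) := by
    rw [htdef]; ring
  rw [h2]
  calc (2 * t + 1) * (2 * (k : ℤ)) = (((2 * t + 1).toNat * (2 * k) : ℕ) : ℤ) := by
        push_cast [htn]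
        ring
    _ ≤ _ := by exact_mod_cast hle

lemma frac_le_one (B : Set ℤ) (N : ℕ) :
    ((B ∩ Set.Icc (-(N : ℤ)) (N : ℤ)).ncard : ℝ) / (2 * (N : ℝ) + 1) ≤ 1 := by
  have h1 : (B ∩ Set.Icc (-(N : ℤ)) (N : ℤ)).ncard ≤ (Set.Icc (-(N : ℤ)) (N : ℤ)).ncard :=
    Set.ncard_le_ncard Set.inter_subset_right (Set.finite_Icc _ _)
  have h2 : (Set.Icc (-(N : ℤ)) (N : ℤ)).ncard = 2 * N + 1 := by
    rw [← Finset.coe_Icc, Set.ncard_coe_finset, Int.card_Icc]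
    omega
  rw [div_le_one (by positivity)]
  calc ((B ∩ Set.Icc (-(N : ℤ)) (N : ℤ)).ncard : ℝ) ≤ ((2 * N + 1 : ℕ) : ℝ) := by
        exact_mod_cast h2 ▸ h1
    _ ≤ 2 * (N : ℝ) + 1 := by push_cast; linarith

lemma density_le_one (B : Set ℤ) : density B ≤ 1 := by
  apply Filter.limsup_le_of_le
  · exact Filter.isCoboundedUnder_le_of_le atTop fun N => by positivity
  · exact Eventually.of_forall fun N => frac_le_one B N

lemma density_Aset_ge (k ℓ : ℕ) (hℓ : 1 ≤ ℓ) (hk : ℓ ≤ k) :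
    (2 * (k : ℝ)) / (4 * (k : ℝ) + 2 * (ℓ : ℝ)) ≤ density (Aset k ℓ) := by
  set m : ℕ := 4 * k + 2 * ℓ with hm
  have hm0 : (0 : ℝ) < (m : ℝ) := by positivity
  set c : ℝ := 2 * (k : ℝ) / m with hc
  set g : ℕ → ℝ := fun N => c - 6 * (k : ℝ) / (2 * (N : ℝ) + 1) with hg
  set F : ℕ → ℝ := fun N : ℕ =>
    ((Aset k ℓ ∩ Set.Icc (-(N : ℤ)) (N : ℤ)).ncard : ℝ) / (2 * (N : ℝ) + 1) with hF
  have hgF : g ≤ᶠ[atTop] F := by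
    filter_upwards [eventually_ge_atTop m] with N hN
    have hcount := count_ge k ℓ N hℓ hk (by omega)
    obtain ⟨D, hDdef⟩ : ∃ D : ℤ, (N : ℤ) / (4 * (k : ℤ) + 2 * ℓ) = D := ⟨_, rfl⟩
    rw [hDdef] at hcount
    have hmz : (0 : ℤ) < 4 * (k : ℤ) + 2 * ℓ := by positivity
    have hDl : (N : ℤ) - (4 * (k : ℤ) + 2 * ℓ) + 1 ≤ (4 * (k : ℤ) + 2 * ℓ) * D := by
      have h1' := Int.emod_lt_of_pos (N : ℤ) hmz
      have h2 := Int.mul_ediv_add_emod (N : ℤ) (4 * (k : ℤ) + 2 * ℓ)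
      rw [hDdef] at h2
      omega
    have hDlr : (N : ℝ) - m + 1 ≤ (m : ℝ) * (D : ℝ) := by
      rw [hm]
      push_cast
      exact_mod_cast hDl
    have hN2 : (0 : ℝ) < 2 * (N : ℝ) + 1 := by positivity
    have hcnt : ((2 * D - 1) * (2 * k) : ℝ) ≤
        ((Aset k ℓ ∩ Set.Icc (-(N : ℤ)) (N : ℤ)).ncard : ℝ) := by
      exact_mod_cast hcount
    have h4 : (c - 6 * (k : ℝ) / (2 * (N : ℝ) + 1)) * (2 * (N : ℝ) + 1) ≤
        (2 * D - 1) * (2 * k) := by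
      have hexp : (c - 6 * (k : ℝ) / (2 * (N : ℝ) + 1)) * (2 * (N : ℝ) + 1) =
          2 * (k : ℝ) * (2 * (N : ℝ) + 1) / m - 6 * k := by
        rw [hc]; field_simp
      rw [hexp, sub_le_iff_le_add, div_le_iff₀ hm0]
      nlinarith [mul_le_mul_of_nonneg_left hDlr (by positivity : (0 : ℝ) ≤ 4 * (k : ℝ))]
    calc g N = c - 6 * (k : ℝ) / (2 * (N : ℝ) + 1) := rfl
      _ ≤ ((2 * D - 1) * (2 * k) : ℝ) / (2 * (N : ℝ) + 1) := by
          rw [le_div_iff₀ hN2]; exact h4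
      _ ≤ F N := by
          rw [hF]
          exact (div_le_div_iff_of_pos_right hN2).mpr hcnt
  have h2N : Tendsto (fun N : ℕ => 2 * (N : ℝ) + 1) atTop atTop := by
    apply tendsto_atTop_add_const_right
    exact (tendsto_natCast_atTop_atTop).const_mul_atTop two_pos
  have hgtend : Tendsto g atTop (nhds c) := by
    have h2 : Tendsto (fun N : ℕ => 6 * (k : ℝ) / (2 * (N : ℝ) + 1)) atTop (nhds 0) :=
      tendsto_const_nhds.div_atTop h2N
    simpa using tendsto_const_nhds.sub h2
  have hlim : limsup g atTop = c := hgtend.limsup_eq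
  have hFb : IsBoundedUnder (· ≤ ·) atTop F :=
    isBoundedUnder_of ⟨1, fun N => frac_le_one _ N⟩
  have hgco : IsCoboundedUnder (· ≤ ·) atTop g := by
    apply Filter.isCoboundedUnder_le_of_le atTop (x := c - 6 * (k : ℝ))
    intro N
    have h5 : 6 * (k : ℝ) / (2 * (N : ℝ) + 1) ≤ 6 * (k : ℝ) := by
      rw [div_le_iff₀ (by positivity)]
      nlinarith [Nat.cast_nonneg (α := ℝ) N, Nat.cast_nonneg (α := ℝ) k]
    simp only [hg]
    linarith
  have hcg : (2 * (k : ℝ)) / (4 * (k : ℝ) + 2 * (ℓ : ℝ)) = c := by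
    rw [hc]
    congr 1
    push_cast [hm]
    ring
  rw [hcg, ← hlim]
  exact Filter.limsup_le_limsup hgF hgco hFb

/-- For `1 ≤ ℓ ≤ k`, `ᾱ({1, 2k, 2k+2ℓ}) ≥ 2k/(4k+2ℓ)`. -/
theorem indRatio_one_even_even_ge (k ℓ : ℕ) (hℓ : 1 ≤ ℓ) (hk : ℓ ≤ k) :
    (2 * (k : ℝ)) / (4 * (k : ℝ) + 2 * (ℓ : ℝ)) ≤
      indRatio ({1, 2 * k, 2 * k + 2 * ℓ} : Finset ℕ) := by
  have h1 : density (Aset k ℓ) ≤ indRatio ({1, 2 * k, 2 * k + 2 * ℓ} : Finset ℕ) := by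
    apply le_csSup
    · refine ⟨1, ?_⟩
      rintro x ⟨B, _, rfl⟩
      exact density_le_one B
    · exact ⟨Aset k ℓ, Aset_indep k ℓ hℓ hk, rfl⟩
  exact le_trans (density_Aset_ge k ℓ hℓ hk) h1
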